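/- Let m ≥ 2, 0 ≤ s ≤ m+1, let I, J ⊆ ℝ be open intervals with x + y > 0 for all x ∈ I, y ∈ J, and let z : I → ℝ^{m+1} and w : J → ℝ^{m+1} be three times continuously differentiable curves. Define L(x,y) = (z(x)+w(y))/(x+y) − (z'(x)+w'(y))/2 and suppose that on I × J: ⟨L, L⟩_s = 1, ⟨∂L/∂x, ∂L/∂x⟩_s = 0, and ⟨∂L/∂y, ∂L/∂y⟩_s = 0. Then the conditions (c.2): 2⟨z(x)+w(y), z'''(x)⟩_s = (x+y)⟨z'(x)+w'(y), z'''(x)⟩_s, and (c.3): 2⟨z(x)+w(y), w'''(y)⟩_s = (x+y)⟨z'(x)+w'(y), w'''(y)⟩_s, hold for all (x,y) ∈ I × J; moreover ⟨∂L/∂x, ∂L/∂y⟩_s = −2/(x+y)² on I × J. -/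

import Mathlib

noncomputable def pform (s n : ℕ) (u v : Fin n → ℝ) : ℝ :=
  ∑ i : Fin n, (if (i : ℕ) < s then -(u i * v i) else u i * v i)

noncomputable def pd1 {E : Type*} [NormedAddCommGroup E] [NormedSpace ℝ E]
    (L : ℝ → ℝ → E) (x y : ℝ) : E :=
  deriv (fun t => L t y) x

noncomputable def pd2 {E : Type*} [NormedAddCommGroup E] [NormedSpace ℝ E]
    (L : ℝ → ℝ → E) (x y : ℝ) : E :=
  deriv (fun t => L x t) y

/- ### auxiliary lemmas -/

lemma pform_comm (s n : ℕ) (u v : Fin n → ℝ) : pform s n u v = pform s n v u := by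
  unfold pform
  refine Finset.sum_congr rfl fun i _ => ?_
  split_ifs <;> ring

lemma pform_add_left (s n : ℕ) (u v w : Fin n → ℝ) :
    pform s n (u + v) w = pform s n u w + pform s n v w := by
  unfold pform
  rw [← Finset.sum_add_distrib]
  refine Finset.sum_congr rfl fun i _ => ?_
  simp only [Pi.add_apply]
  split_ifs <;> ring

lemma pform_sub_left (s n : ℕ) (u v w : Fin n → ℝ) :
    pform s n (u - v) w = pform s n u w - pform s n v w := by
  unfold pform
  rw [← Finset.sum_sub_distrib]
  refine Finset.sum_congr rfl fun i _ => ?_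
  simp only [Pi.sub_apply]
  split_ifs <;> ring

lemma pform_smul_left (s n : ℕ) (a : ℝ) (u v : Fin n → ℝ) :
    pform s n (a • u) v = a * pform s n u v := by
  unfold pform
  rw [Finset.mul_sum]
  refine Finset.sum_congr rfl fun i _ => ?_
  simp only [Pi.smul_apply, smul_eq_mul]
  split_ifs <;> ring

lemma pform_add_right (s n : ℕ) (u v w : Fin n → ℝ) :
    pform s n u (v + w) = pform s n u v + pform s n u w := by
  rw [pform_comm, pform_add_left, pform_comm s n v u, pform_comm s n w u]

lemma pform_smul_right (s n : ℕ) (a : ℝ) (u v : Fin n → ℝ) :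
    pform s n u (a • v) = a * pform s n u v := by
  rw [pform_comm, pform_smul_left, pform_comm s n v u]

lemma hasDerivAt_pform {s n : ℕ} {f g : ℝ → Fin n → ℝ} {f' g' : Fin n → ℝ} {x : ℝ}
    (hf : HasDerivAt f f' x) (hg : HasDerivAt g g' x) :
    HasDerivAt (fun t => pform s n (f t) (g t))
      (pform s n f' (g x) + pform s n (f x) g') x := by
  have hfi := hasDerivAt_pi.mp hf
  have hgi := hasDerivAt_pi.mp hg
  unfold pform
  rw [← Finset.sum_add_distrib]
  apply HasDerivAt.fun_sum
  intro i _
  by_cases h : (i : ℕ) < s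
  · simp only [if_pos h]
    have := ((hfi i).mul (hgi i)).neg
    convert this using 1
    · rfl
    ring
  · simp only [if_neg h]
    exact (hfi i).mul (hgi i)

lemma hasDerivAt3 {E : Type*} [NormedAddCommGroup E] [NormedSpace ℝ E]
    {f : ℝ → E} {I : Set ℝ} (hIo : IsOpen I) (hf : ContDiffOn ℝ 3 f I) {x : ℝ} (hx : x ∈ I) :
    HasDerivAt f (deriv f x) x ∧ HasDerivAt (deriv f) (deriv (deriv f) x) x ∧
      HasDerivAt (deriv (deriv f)) (deriv (deriv (deriv f)) x) x := by
  have h1 : ContDiffOn ℝ 2 (deriv f) I := hf.deriv_of_isOpen hIo (by norm_num)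
  have h2 : ContDiffOn ℝ 1 (deriv (deriv f)) I := h1.deriv_of_isOpen hIo (by norm_num)
  refine ⟨?_, ?_, ?_⟩
  · exact ((hf.differentiableOn (by norm_num)).differentiableAt (hIo.mem_nhds hx)).hasDerivAt
  · exact ((h1.differentiableOn (by norm_num)).differentiableAt (hIo.mem_nhds hx)).hasDerivAt
  · exact ((h2.differentiableOn (by norm_num)).differentiableAt (hIo.mem_nhds hx)).hasDerivAt

noncomputable def dA1 {n : ℕ} (z w : ℝ → Fin n → ℝ) (x y : ℝ) : Fin n → ℝ :=
  (-((x + y) ^ 2)⁻¹) • (z x + w y) + (x + y)⁻¹ • deriv z x + (-(2 : ℝ)⁻¹) • deriv (deriv z) x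

noncomputable def dA2 {n : ℕ} (z w : ℝ → Fin n → ℝ) (x y : ℝ) : Fin n → ℝ :=
  (2 * ((x + y) ^ 3)⁻¹) • (z x + w y) + (-(2 * ((x + y) ^ 2)⁻¹)) • deriv z x +
    (x + y)⁻¹ • deriv (deriv z) x + (-(2 : ℝ)⁻¹) • deriv (deriv (deriv z)) x

noncomputable def dB1 {n : ℕ} (z w : ℝ → Fin n → ℝ) (x y : ℝ) : Fin n → ℝ :=
  (-((x + y) ^ 2)⁻¹) • (z x + w y) + (x + y)⁻¹ • deriv w y + (-(2 : ℝ)⁻¹) • deriv (deriv w) y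

noncomputable def dC {n : ℕ} (z w : ℝ → Fin n → ℝ) (x y : ℝ) : Fin n → ℝ :=
  (2 * ((x + y) ^ 3)⁻¹) • (z x + w y) + (-((x + y) ^ 2)⁻¹) • (deriv z x + deriv w y)

set_option maxHeartbeats 2000000 in
lemma aux_main (m s : ℕ) (I J : Set ℝ) (hIo : IsOpen I) (hJo : IsOpen J)
    (hpos : ∀ x ∈ I, ∀ y ∈ J, 0 < x + y)
    (z w : ℝ → Fin (m + 1) → ℝ) (hz : ContDiffOn ℝ 3 z I) (hw : ContDiffOn ℝ 3 w J)
    (L : ℝ → ℝ → Fin (m + 1) → ℝ)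
    (hLdef : ∀ x y : ℝ,
      L x y = (1 / (x + y)) • (z x + w y) - (1 / 2 : ℝ) • (deriv z x + deriv w y))
    (hLL : ∀ x ∈ I, ∀ y ∈ J, pform s (m + 1) (L x y) (L x y) = 1)
    (hxx : ∀ x ∈ I, ∀ y ∈ J, pform s (m + 1) (pd1 L x y) (pd1 L x y) = 0) :
    (∀ x ∈ I, ∀ y ∈ J, pform s (m + 1) (L x y) (deriv (deriv (deriv z)) x) = 0) ∧
    (∀ x ∈ I, ∀ y ∈ J, pform s (m + 1) (pd1 L x y) (pd2 L x y) = -2 / (x + y) ^ 2) := by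
  -- derivative formulas
  have hA1 : ∀ x ∈ I, ∀ y ∈ J, HasDerivAt (fun t => L t y) (dA1 z w x y) x := by
    intro x hx y hy
    have hp : x + y ≠ 0 := (hpos x hx y hy).ne'
    obtain ⟨hz1, hz2, _⟩ := hasDerivAt3 hIo hz hx
    have hq : HasDerivAt (fun t : ℝ => t + y) 1 x := (hasDerivAt_id x).add_const y
    have hinv : HasDerivAt (fun t : ℝ => (t + y)⁻¹) (-1 / (x + y) ^ 2) x := hq.inv hp
    have hterm1 := hinv.smul (hz1.add_const (w y))
    have hterm2 := (hz2.add_const (deriv w y)).const_smul (1 / 2 : ℝ)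
    have hmain := hterm1.sub hterm2
    have hfun : (fun t => L t y)
        = fun t => (t + y)⁻¹ • (z t + w y) - (1 / 2 : ℝ) • (deriv z t + deriv w y) := by
      funext t; rw [hLdef t y, one_div]
    rw [hfun]
    convert hmain using 1
    · rfl
    · rfl
    · rfl
    · rfl
    funext i
    simp only [dA1, Pi.add_apply, Pi.sub_apply, Pi.smul_apply, smul_eq_mul]
    field_simp
    ring
  have hA2 : ∀ x ∈ I, ∀ y ∈ J, HasDerivAt (fun t => dA1 z w t y) (dA2 z w x y) x := by
    intro x hx y hy
    have hp : x + y ≠ 0 := (hpos x hx y hy).ne'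
    obtain ⟨hz1, hz2, hz3⟩ := hasDerivAt3 hIo hz hx
    have hq : HasDerivAt (fun t : ℝ => t + y) 1 x := (hasDerivAt_id x).add_const y
    have hinv : HasDerivAt (fun t : ℝ => (t + y)⁻¹) (-1 / (x + y) ^ 2) x := hq.inv hp
    have hc1 := ((hq.pow 2).inv (pow_ne_zero 2 hp)).neg
    have hterm1 := hc1.smul (hz1.add_const (w y))
    have hterm2 := hinv.smul hz2
    have hterm3 := hz3.const_smul (-(2 : ℝ)⁻¹)
    have hmain := (hterm1.add hterm2).add hterm3
    convert hmain using 1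
    · rfl
    · rfl
    · rfl
    · rfl
    funext i
    simp only [dA1, dA2, Pi.add_apply, Pi.smul_apply, Pi.neg_apply, smul_eq_mul, Pi.pow_apply, Pi.inv_apply, Pi.zero_apply]
    field_simp
    ring
  have hB1 : ∀ x ∈ I, ∀ y ∈ J, HasDerivAt (fun t => L x t) (dB1 z w x y) y := by
    intro x hx y hy
    have hp : x + y ≠ 0 := (hpos x hx y hy).ne'
    obtain ⟨hw1, hw2, _⟩ := hasDerivAt3 hJo hw hy
    have hq : HasDerivAt (fun t : ℝ => x + t) 1 y := (hasDerivAt_id y).const_add x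
    have hinv : HasDerivAt (fun t : ℝ => (x + t)⁻¹) (-1 / (x + y) ^ 2) y := hq.inv hp
    have hterm1 := hinv.smul (hw1.const_add (z x))
    have hterm2 := (hw2.const_add (deriv z x)).const_smul (1 / 2 : ℝ)
    have hmain := hterm1.sub hterm2
    have hfun : (fun t => L x t)
        = fun t => (x + t)⁻¹ • (z x + w t) - (1 / 2 : ℝ) • (deriv z x + deriv w t) := by
      funext t; rw [hLdef x t, one_div]
    rw [hfun]
    convert hmain using 1
    · rfl
    · rfl
    · rfl
    · rfl
    funext i
    simp only [dB1, Pi.add_apply, Pi.sub_apply, Pi.smul_apply, smul_eq_mul]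
    field_simp
    ring
  have hC : ∀ x ∈ I, ∀ y ∈ J, HasDerivAt (fun t => dA1 z w x t) (dC z w x y) y := by
    intro x hx y hy
    have hp : x + y ≠ 0 := (hpos x hx y hy).ne'
    obtain ⟨hw1, _, _⟩ := hasDerivAt3 hJo hw hy
    have hq : HasDerivAt (fun t : ℝ => x + t) 1 y := (hasDerivAt_id y).const_add x
    have hinv : HasDerivAt (fun t : ℝ => (x + t)⁻¹) (-1 / (x + y) ^ 2) y := hq.inv hp
    have hc1 := ((hq.pow 2).inv (pow_ne_zero 2 hp)).neg
    have hterm1 := hc1.smul (hw1.const_add (z x))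
    have hterm2 := hinv.smul (hasDerivAt_const y (deriv z x))
    have hterm3 := hasDerivAt_const y ((-(2 : ℝ)⁻¹) • deriv (deriv z) x)
    have hmain := (hterm1.add hterm2).add hterm3
    have hfun : (fun t => dA1 z w x t)
        = fun t => (-((x + t) ^ 2)⁻¹) • (z x + w t) + (x + t)⁻¹ • deriv z x +
          (-(2 : ℝ)⁻¹) • deriv (deriv z) x := by
      funext t; rfl
    rw [hfun]
    convert hmain using 1
    · rfl
    · rfl
    · rfl
    · rfl
    funext i
    simp only [dC, Pi.add_apply, Pi.smul_apply, Pi.neg_apply, smul_eq_mul, Pi.pow_apply, Pi.inv_apply, Pi.zero_apply]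
    field_simp
    ring
  have hpd1 : ∀ x ∈ I, ∀ y ∈ J, pd1 L x y = dA1 z w x y := by
    intro x hx y hy
    exact (hA1 x hx y hy).deriv
  have hpd2 : ∀ x ∈ I, ∀ y ∈ J, pd2 L x y = dB1 z w x y := by
    intro x hx y hy
    exact (hB1 x hx y hy).deriv
  -- first scalar identity: <L_x, L> = 0
  have h1 : ∀ x ∈ I, ∀ y ∈ J, pform s (m + 1) (dA1 z w x y) (L x y) = 0 := by
    intro x hx y hy
    have hD := hasDerivAt_pform (s := s) (hA1 x hx y hy) (hA1 x hx y hy)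
    have heq : (fun t => pform s (m + 1) (L t y) (L t y)) =ᶠ[nhds x] fun _ => (1 : ℝ) :=
      Filter.eventuallyEq_of_mem (hIo.mem_nhds hx) fun t ht => hLL t ht y hy
    have h0 : HasDerivAt (fun t => pform s (m + 1) (L t y) (L t y)) 0 x :=
      (hasDerivAt_const x (1 : ℝ)).congr_of_eventuallyEq heq
    have huniq := hD.unique h0
    have hco := pform_comm s (m + 1) (L x y) (dA1 z w x y)
    linarith
  -- second scalar identity: <L_xx, L> = 0
  have h2 : ∀ x ∈ I, ∀ y ∈ J, pform s (m + 1) (dA2 z w x y) (L x y) = 0 := by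
    intro x hx y hy
    have hD := hasDerivAt_pform (s := s) (hA2 x hx y hy) (hA1 x hx y hy)
    have heq : (fun t => pform s (m + 1) (dA1 z w t y) (L t y)) =ᶠ[nhds x] fun _ => (0 : ℝ) :=
      Filter.eventuallyEq_of_mem (hIo.mem_nhds hx) fun t ht => h1 t ht y hy
    have h0 : HasDerivAt (fun t => pform s (m + 1) (dA1 z w t y) (L t y)) 0 x :=
      (hasDerivAt_const x (0 : ℝ)).congr_of_eventuallyEq heq
    have huniq := hD.unique h0
    have hAA : pform s (m + 1) (dA1 z w x y) (dA1 z w x y) = 0 := by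
      have := hxx x hx y hy
      rwa [hpd1 x hx y hy] at this
    linarith
  constructor
  · -- <L, z'''> = 0
    intro x hx y hy
    have hp : x + y ≠ 0 := (hpos x hx y hy).ne'
    have hzzz : deriv (deriv (deriv z)) x
        = (-2 : ℝ) • dA2 z w x y + (-(4 * (x + y)⁻¹)) • dA1 z w x y := by
      funext i
      simp only [dA1, dA2, Pi.add_apply, Pi.smul_apply, smul_eq_mul]
      field_simp
      ring
    rw [hzzz, pform_add_right, pform_smul_right, pform_smul_right,
      pform_comm s (m + 1) (L x y) (dA2 z w x y), pform_comm s (m + 1) (L x y) (dA1 z w x y),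
      h1 x hx y hy, h2 x hx y hy]
    ring
  · -- <L_x, L_y> = -2/(x+y)^2
    intro x hx y hy
    have hp : x + y ≠ 0 := (hpos x hx y hy).ne'
    have hD := hasDerivAt_pform (s := s) (hC x hx y hy) (hB1 x hx y hy)
    have heq : (fun t => pform s (m + 1) (dA1 z w x t) (L x t)) =ᶠ[nhds y] fun _ => (0 : ℝ) :=
      Filter.eventuallyEq_of_mem (hJo.mem_nhds hy) fun t ht => h1 x hx t ht
    have h0 : HasDerivAt (fun t => pform s (m + 1) (dA1 z w x t) (L x t)) 0 y :=
      (hasDerivAt_const y (0 : ℝ)).congr_of_eventuallyEq heq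
    have huniq := hD.unique h0
    have hCL : dC z w x y = (2 * ((x + y) ^ 2)⁻¹) • L x y := by
      rw [hLdef x y]
      funext i
      simp only [dC, Pi.add_apply, Pi.sub_apply, Pi.smul_apply, smul_eq_mul]
      field_simp
      ring
    rw [hCL, pform_smul_left, hLL x hx y hy] at huniq
    rw [hpd1 x hx y hy, hpd2 x hx y hy]
    have : pform s (m + 1) (dA1 z w x y) (dB1 z w x y) = -(2 * ((x + y) ^ 2)⁻¹) := by
      linarith
    rw [this]
    field_simp

theorem stmt_10 (m s : ℕ) (hm : 2 ≤ m) (hs : s ≤ m + 1) (I J : Set ℝ)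
    (hIo : IsOpen I) (hIc : I.OrdConnected) (hJo : IsOpen J) (hJc : J.OrdConnected)
    (hpos : ∀ x ∈ I, ∀ y ∈ J, 0 < x + y)
    (z w : ℝ → Fin (m + 1) → ℝ) (hz : ContDiffOn ℝ 3 z I) (hw : ContDiffOn ℝ 3 w J)
    (L : ℝ → ℝ → Fin (m + 1) → ℝ)
    (hLdef : ∀ x y : ℝ,
      L x y = (1 / (x + y)) • (z x + w y) - (1 / 2 : ℝ) • (deriv z x + deriv w y))
    (hLL : ∀ x ∈ I, ∀ y ∈ J, pform s (m + 1) (L x y) (L x y) = 1)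
    (hxx : ∀ x ∈ I, ∀ y ∈ J, pform s (m + 1) (pd1 L x y) (pd1 L x y) = 0)
    (hyy : ∀ x ∈ I, ∀ y ∈ J, pform s (m + 1) (pd2 L x y) (pd2 L x y) = 0) :
    (∀ x ∈ I, ∀ y ∈ J,
      2 * pform s (m + 1) (z x + w y) (deriv (deriv (deriv z)) x) =
        (x + y) * pform s (m + 1) (deriv z x + deriv w y) (deriv (deriv (deriv z)) x)) ∧
    (∀ x ∈ I, ∀ y ∈ J,
      2 * pform s (m + 1) (z x + w y) (deriv (deriv (deriv w)) y) =
        (x + y) * pform s (m + 1) (deriv z x + deriv w y) (deriv (deriv (deriv w)) y)) ∧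
    (∀ x ∈ I, ∀ y ∈ J, pform s (m + 1) (pd1 L x y) (pd2 L x y) = -2 / (x + y) ^ 2) := by
  obtain ⟨aux1, aux3⟩ := aux_main m s I J hIo hJo hpos z w hz hw L hLdef hLL hxx
  have hpos' : ∀ x ∈ J, ∀ y ∈ I, 0 < x + y := fun x hx y hy => by
    have := hpos y hy x hx; linarith
  have hLdef' : ∀ x y : ℝ, (fun a b => L b a) x y
      = (1 / (x + y)) • (w x + z y) - (1 / 2 : ℝ) • (deriv w x + deriv z y) := by
    intro x y
    show L y x = _
    rw [hLdef y x, add_comm y x, add_comm (z y) (w x), add_comm (deriv z y) (deriv w x)]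
  have hLL' : ∀ x ∈ J, ∀ y ∈ I,
      pform s (m + 1) ((fun a b => L b a) x y) ((fun a b => L b a) x y) = 1 :=
    fun x hx y hy => hLL y hy x hx
  have hxx' : ∀ x ∈ J, ∀ y ∈ I,
      pform s (m + 1) (pd1 (fun a b => L b a) x y) (pd1 (fun a b => L b a) x y) = 0 := by
    intro x hx y hy
    have := hyy y hy x hx
    simpa [pd1, pd2] using this
  obtain ⟨aux2, -⟩ := aux_main m s J I hJo hIo hpos' w z hw hz (fun a b => L b a)
    hLdef' hLL' hxx'
  refine ⟨?_, ?_, ?_⟩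
  · intro x hx y hy
    have hp : x + y ≠ 0 := (hpos x hx y hy).ne'
    have key := aux1 x hx y hy
    rw [hLdef x y, pform_sub_left, pform_smul_left, pform_smul_left] at key
    field_simp at key
    linarith
  · intro x hx y hy
    have hp : x + y ≠ 0 := (hpos x hx y hy).ne'
    have key : pform s (m + 1) (L x y) (deriv (deriv (deriv w)) y) = 0 := aux2 y hy x hx
    rw [hLdef x y, pform_sub_left, pform_smul_left, pform_smul_left] at key
    field_simp at key
    linarith
  · exact aux3
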